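/- For every nonempty countable set σ, the space 𝐋_σ is an interior image of the Cantor space: there exists a surjective map from 𝐂 onto L_σ that is continuous and open with respect to the product topology on 𝐂 and the Scott topology on L_σ. -/

import Mathlib

open Set

/-- Finite and infinite `σ`-valued sequences, encoded as functions `ℕ → Option σ` whose
domain of definition is an initial segment of `ℕ`. -/
structure Lgen (σ : Type*) where
  toFun : ℕ → Option σ
  init : ∀ n, toFun (n + 1) ≠ none → toFun n ≠ none

/-- The initial-segment (prefix) partial order on `Lgen σ`. -/
instance Lgen.instPartialOrder {σ : Type*} : PartialOrder (Lgen σ) where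
  le f g := ∀ (n : ℕ) (s : σ), f.toFun n = some s → g.toFun n = some s
  le_refl f n s h := h
  le_trans f g h hfg hgh n s hs := hgh n s (hfg n s hs)
  le_antisymm f g hfg hgf := by
    obtain ⟨ff, hf⟩ := f
    obtain ⟨gf, hg⟩ := g
    have hfun : ff = gf := by
      funext n
      cases hfn : ff n with
      | some s =>
        have h2 : gf n = some s := hfg n s hfn
        exact h2.symm
      | none =>
        cases hgn : gf n with
        | some s =>
          have h2 : ff n = some s := hgf n s hgn
          rw [hfn] at h2
          exact absurd h2 (by simp)
        | none => rfl
    subst hfun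
    rfl

/-- The finite sequence given by a list, as an element of `Lgen σ`. -/
def Lgen.ofList {σ : Type*} (l : List σ) : Lgen σ where
  toFun n := l[n]?
  init n h := by
    simp only [ne_eq, List.getElem?_eq_none_iff, not_le] at h ⊢
    omega

/-- The infinite binary tree with limits `L₂`: finite and infinite binary sequences with the
initial-segment order. -/
abbrev L2 : Type := Lgen Bool

/-- The Scott topology of a preorder: opens are the upper sets `U` such that every nonempty
directed set whose least upper bound lies in `U` meets `U`. -/
def scottTopology (α : Type*) [Preorder α] : TopologicalSpace α where
  IsOpen U := IsUpperSet U ∧ ∀ d : Set α, d.Nonempty → DirectedOn (· ≤ ·) d →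
      ∀ x, IsLUB d x → x ∈ U → (d ∩ U).Nonempty
  isOpen_univ := ⟨isUpperSet_univ, fun d hd _ _ _ _ => hd.imp fun y hy => ⟨hy, mem_univ y⟩⟩
  isOpen_inter := by
    rintro U V ⟨hU1, hU2⟩ ⟨hV1, hV2⟩
    refine ⟨hU1.inter hV1, fun d hdne hdir x hlub hx => ?_⟩
    obtain ⟨a, ha, haU⟩ := hU2 d hdne hdir x hlub hx.1
    obtain ⟨b, hb, hbV⟩ := hV2 d hdne hdir x hlub hx.2
    obtain ⟨c, hc, hac, hbc⟩ := hdir a ha b hb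
    exact ⟨c, hc, hU1 hac haU, hV1 hbc hbV⟩
  isOpen_sUnion := by
    intro S hS
    refine ⟨fun a b hab ha => ?_, fun d hdne hdir x hlub hx => ?_⟩
    · obtain ⟨U, hU, haU⟩ := ha
      exact ⟨U, hU, (hS U hU).1 hab haU⟩
    · obtain ⟨U, hU, hxU⟩ := hx
      obtain ⟨a, ha, haU⟩ := (hS U hU).2 d hdne hdir x hlub hxU
      exact ⟨a, ha, U, hU, haU⟩

/-- Each poset `L_σ` of finite and infinite `σ`-valued sequences carries the Scott topology. -/
instance {σ : Type*} : TopologicalSpace (Lgen σ) := scottTopology (Lgen σ)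

namespace S11
variable {σ : Type*}

/-- the parsing automaton -/
def step (e : ℕ → σ) : (List σ × ℕ) → Bool → (List σ × ℕ)
  | p, true => (p.1, p.2 + 1)
  | p, false => (p.1 ++ [e p.2], 0)

def PA (e : ℕ → σ) (k : ℕ) (w : List Bool) : List σ × ℕ := w.foldl (step e) ([], k)

lemma PA_nil (e : ℕ → σ) (k : ℕ) : PA e k [] = ([], k) := rfl

lemma PA_cons (e : ℕ → σ) (k : ℕ) (b : Bool) (t : List Bool) :
    PA e k (b :: t) = t.foldl (step e) (step e ([], k) b) := rfl

lemma foldl_step (e : ℕ → σ) (w : List Bool) :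
    ∀ (l : List σ) (k : ℕ), w.foldl (step e) (l, k) = (l ++ (PA e k w).1, (PA e k w).2) := by
  induction w with
  | nil => intro l k; simp [PA]
  | cons b t ih =>
    intro l k
    cases b with
    | true =>
      show t.foldl (step e) (l, k + 1) = _
      rw [ih l (k+1), PA_cons]
      show _ = (l ++ (t.foldl (step e) ([], k+1)).1, (t.foldl (step e) ([], k+1)).2)
      rw [show t.foldl (step e) ([], k+1) = _ from ih [] (k+1)]
      simp [PA]
    | false =>
      show t.foldl (step e) (l ++ [e k], 0) = _
      rw [ih (l ++ [e k]) 0, PA_cons]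
      show _ = (l ++ (t.foldl (step e) ([e k], 0)).1, (t.foldl (step e) ([e k], 0)).2)
      rw [show t.foldl (step e) ([e k], 0) = _ from ih [e k] 0]
      simp [PA]

lemma PA_append (e : ℕ → σ) (k : ℕ) (w v : List Bool) :
    PA e k (w ++ v) = ((PA e k w).1 ++ (PA e (PA e k w).2 v).1, (PA e (PA e k w).2 v).2) := by
  unfold PA
  rw [List.foldl_append]
  rcases hw : List.foldl (step e) ([], k) w with ⟨l1, k1⟩
  rw [foldl_step]
  simp [PA]

lemma PA_fst_prefix (e : ℕ → σ) (k : ℕ) (w v : List Bool) :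
    (PA e k w).1 <+: (PA e k (w ++ v)).1 := by
  rw [PA_append]; exact List.prefix_append _ _

lemma PA_replicate_true (e : ℕ → σ) (k j : ℕ) :
    PA e k (List.replicate j true) = ([], k + j) := by
  induction j generalizing k with
  | zero => simp [PA]
  | succ j ih =>
    rw [List.replicate_succ, PA_cons]
    show List.foldl (step e) ([], k + 1) (List.replicate j true) = _
    rw [show List.foldl (step e) ([], k+1) (List.replicate j true) = _ from ih (k+1)]
    ring_nf

lemma PA_snoc_false (e : ℕ → σ) (k : ℕ) (v : List Bool) :
    PA e k (v ++ [false]) = ((PA e k v).1 ++ [e (PA e k v).2], 0) := by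
  rw [PA_append]
  rcases PA e k v with ⟨l1, k1⟩
  simp [PA, PA_cons, step]

lemma PA_length (e : ℕ → σ) (k : ℕ) (v : List Bool) :
    (PA e k v).1.length = v.count false := by
  induction v generalizing k with
  | nil => simp [PA]
  | cons b t ih =>
    cases b with
    | true =>
      rw [PA_cons]
      show (List.foldl (step e) ([], k+1) t).1.length = _
      rw [show List.foldl (step e) ([], k+1) t = _ from foldl_step e t [] (k+1)]
      simpa [PA] using ih (k+1)
    | false =>
      rw [PA_cons]
      show (List.foldl (step e) ([e k], 0) t).1.length = _
      rw [show List.foldl (step e) ([e k], 0) t = _ from foldl_step e t [e k] 0]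
      simp only [List.length_append, List.length_cons, List.length_nil]
      rw [show (PA e 0 t).1.length = _ from ih 0]
      simp [List.count_cons]
      omega

def pref (x : ℕ → Bool) (M : ℕ) : List Bool := (List.range M).map x

@[simp] lemma pref_length (x : ℕ → Bool) (M : ℕ) : (pref x M).length = M := by simp [pref]

lemma pref_prefix (x : ℕ → Bool) {M M' : ℕ} (h : M ≤ M') : pref x M <+: pref x M' := by
  have : pref x M = (pref x M').take M := by
    rw [pref, pref, ← List.map_take, List.take_range, Nat.min_eq_left h]
  rw [this]
  exact List.take_prefix _ _

lemma pref_add (x : ℕ → Bool) (A B : ℕ) :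
    pref x (A + B) = pref x A ++ (List.range B).map (fun i => x (A + i)) := by
  rw [pref, List.range_add, List.map_append, List.map_map, pref]
  rfl

def parse (e : ℕ → σ) (w : List Bool) : List σ := (PA e 0 w).1

lemma parse_prefix_mono (e : ℕ → σ) {x : ℕ → Bool} {M M' : ℕ} (h : M ≤ M') :
    parse e (pref x M) <+: parse e (pref x M') := by
  obtain ⟨t, ht⟩ := pref_prefix x h
  rw [parse, parse, ← ht]
  exact PA_fst_prefix e 0 _ t

lemma getElem?_of_prefix {l l' : List σ} {n : ℕ} {s : σ} (h : l <+: l') (h2 : l[n]? = some s) :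
    l'[n]? = some s := by
  obtain ⟨t, rfl⟩ := h
  rw [List.getElem?_append, if_pos (by simpa using (List.getElem?_eq_some_iff.mp h2).1)]
  exact h2

lemma parse_stable (e : ℕ → σ) {x : ℕ → Bool} {M M' n : ℕ} {s : σ} (h : M ≤ M')
    (h2 : (parse e (pref x M))[n]? = some s) : (parse e (pref x M'))[n]? = some s :=
  getElem?_of_prefix (parse_prefix_mono e h) h2

open Classical in
noncomputable def F (e : ℕ → σ) (x : ℕ → Bool) : Lgen σ where
  toFun n := if h : ∃ M s, (parse e (pref x M))[n]? = some s
    then (parse e (pref x h.choose))[n]? else none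
  init n hne := by
    simp only [ne_eq] at hne ⊢
    by_cases h1 : ∃ M s, (parse e (pref x M))[n+1]? = some s
    case neg =>
      exact absurd (dif_neg h1) hne
    case pos =>
      obtain ⟨M, s, hMs⟩ := h1
      have hlen : n + 1 < (parse e (pref x M)).length := by
        simpa using (List.getElem?_eq_some_iff.mp hMs).1
      have hn : (parse e (pref x M))[n]? = some ((parse e (pref x M))[n]'(by omega)) :=
        List.getElem?_eq_getElem (by omega)
      have h2 : ∃ M s, (parse e (pref x M))[n]? = some s := ⟨M, _, hn⟩
      rw [dif_pos h2]
      obtain ⟨s2, hs2⟩ := h2.choose_spec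
      rw [hs2]
      simp

lemma F_spec (e : ℕ → σ) {x : ℕ → Bool} {M n : ℕ} {s : σ}
    (hM : (parse e (pref x M))[n]? = some s) : (F e x).toFun n = some s := by
  have h : ∃ M s, (parse e (pref x M))[n]? = some s := ⟨M, s, hM⟩
  classical
  show dite _ _ _ = some s
  rw [dif_pos h]
  obtain ⟨s2, hs2⟩ := h.choose_spec
  rw [hs2]
  have e1 : (parse e (pref x (max M h.choose)))[n]? = some s := parse_stable e (le_max_left _ _) hM
  have e2 : (parse e (pref x (max M h.choose)))[n]? = some s2 := parse_stable e (le_max_right _ _) hs2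
  rw [e1] at e2
  exact e2.symm

lemma F_some_iff (e : ℕ → σ) {x : ℕ → Bool} {n : ℕ} {s : σ} :
    (F e x).toFun n = some s ↔ ∃ M, (parse e (pref x M))[n]? = some s := by
  constructor
  · intro h
    by_cases h1 : ∃ M s, (parse e (pref x M))[n]? = some s
    · obtain ⟨M, s2, hMs⟩ := h1
      have := F_spec e hMs
      rw [this] at h
      exact ⟨M, by rw [hMs, Option.some_inj.mp h]⟩
    · exfalso
      have : (F e x).toFun n = none := dif_neg h1
      rw [this] at h
      exact nomatch h
  · rintro ⟨M, hM⟩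
    exact F_spec e hM

lemma F_none_iff (e : ℕ → σ) {x : ℕ → Bool} {n : ℕ} :
    (F e x).toFun n = none ↔ ∀ M, (parse e (pref x M)).length ≤ n := by
  constructor
  · intro h M
    by_contra hlt
    push_neg at hlt
    have : (parse e (pref x M))[n]? = some _ := List.getElem?_eq_getElem hlt
    rw [F_spec e this] at h
    exact nomatch h
  · intro h
    cases hF : (F e x).toFun n with
    | none => rfl
    | some s =>
      obtain ⟨M, hM⟩ := (F_some_iff e).mp hF
      have := h M
      have := (List.getElem?_eq_some_iff.mp hM).1
      omega




variable {σ : Type*}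

lemma le_def {f g : Lgen σ} :
    f ≤ g ↔ ∀ (n : ℕ) (s : σ), f.toFun n = some s → g.toFun n = some s := Iff.rfl

lemma defined_mono (g : Lgen σ) {m n : ℕ} (h : m ≤ n) (hn : g.toFun n ≠ none) :
    g.toFun m ≠ none := by
  induction n with
  | zero => rwa [Nat.le_zero.mp h]
  | succ n ih =>
    rcases Nat.lt_or_ge m (n + 1) with hm | hm
    · exact ih (by omega) (g.init n hn)
    · rwa [le_antisymm h hm]

@[simp] lemma ofList_toFun (l : List σ) (n : ℕ) : (Lgen.ofList l).toFun n = l[n]? := rfl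

def trunc (g : Lgen σ) (N : ℕ) : Lgen σ where
  toFun n := if n < N then g.toFun n else none
  init n h := by
    simp only [ne_eq] at h ⊢
    split at h
    · next h1 =>
      rw [if_pos (by omega)]
      exact g.init n h
    · exact absurd rfl h

lemma trunc_toFun (g : Lgen σ) (N n : ℕ) :
    (trunc g N).toFun n = if n < N then g.toFun n else none := rfl

lemma trunc_le (g : Lgen σ) (N : ℕ) : trunc g N ≤ g := by
  intro n s h
  rw [trunc_toFun] at h
  split at h
  · exact h
  · exact nomatch h

lemma trunc_mono (g : Lgen σ) {N N' : ℕ} (h : N ≤ N') : trunc g N ≤ trunc g N' := by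
  intro n s hs
  rw [trunc_toFun] at hs ⊢
  split at hs
  · rw [if_pos (by omega)]; exact hs
  · exact absurd hs (by simp)

lemma isLUB_trunc (g : Lgen σ) : IsLUB (Set.range (trunc g)) g := by
  constructor
  · rintro a ⟨N, rfl⟩
    exact trunc_le g N
  · intro b hb n s hs
    have : trunc g (n + 1) ≤ b := hb ⟨n + 1, rfl⟩
    exact this n s (by rw [trunc_toFun, if_pos (by omega)]; exact hs)

lemma directedOn_trunc (g : Lgen σ) : DirectedOn (· ≤ ·) (Set.range (trunc g)) := by
  rintro a ⟨N, rfl⟩ b ⟨N', rfl⟩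
  exact ⟨trunc g (max N N'), ⟨max N N', rfl⟩, trunc_mono g (le_max_left _ _),
    trunc_mono g (le_max_right _ _)⟩

lemma isOpen_iff {U : Set (Lgen σ)} :
    IsOpen U ↔ IsUpperSet U ∧ ∀ d : Set (Lgen σ), d.Nonempty → DirectedOn (· ≤ ·) d →
      ∀ x, IsLUB d x → x ∈ U → (d ∩ U).Nonempty := Iff.rfl

lemma exists_mem_of_isLUB {d : Set (Lgen σ)} {x : Lgen σ} (h : IsLUB d x) {n : ℕ} {s : σ}
    (hn : x.toFun n = some s) : ∃ a ∈ d, a.toFun n = some s := by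
  by_contra hc
  push_neg at hc
  have hub : trunc x n ∈ upperBounds d := by
    intro a ha m t hmt
    have hx : x.toFun m = some t := h.1 ha m t hmt
    have hmn : m < n := by
      by_contra hge
      push_neg at hge
      have han : a.toFun n ≠ none := defined_mono a hge (by rw [hmt]; simp)
      cases hns : a.toFun n with
      | none => exact han hns
      | some t' =>
        have : x.toFun n = some t' := h.1 ha n t' hns
        rw [hn] at this
        exact hc a ha (by rw [hns, Option.some_inj.mp this])
    rw [trunc_toFun, if_pos hmn]
    exact hx
  have : x ≤ trunc x n := h.2 hub
  have := this n s hn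
  rw [trunc_toFun, if_neg (by omega)] at this
  exact nomatch this

lemma isOpen_Ici_ofList (l : List σ) : IsOpen (Set.Ici (Lgen.ofList l)) := by
  rw [isOpen_iff]
  refine ⟨isUpperSet_Ici _, ?_⟩
  intro d hdne hdir x hlub hx
  rcases List.eq_nil_or_concat l with rfl | ⟨l', a, rfl⟩
  · obtain ⟨b, hb⟩ := hdne
    refine ⟨b, hb, ?_⟩
    intro n s hs
    simp at hs
  · have hx1 : x.toFun l'.length = some a :=
      hx l'.length a (by simp [List.getElem?_append_right])
    obtain ⟨b, hb, hbn⟩ := exists_mem_of_isLUB hlub hx1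
    refine ⟨b, hb, ?_⟩
    intro m s hms
    simp only [ofList_toFun] at hms
    have hmlen : m < l'.length + 1 := by simpa using (List.getElem?_eq_some_iff.mp hms).1
    have hbm : b.toFun m ≠ none := defined_mono b (by omega : m ≤ l'.length) (by rw [hbn]; simp)
    cases hbms : b.toFun m with
    | none => exact absurd hbms hbm
    | some t =>
      have hxt : x.toFun m = some t := hlub.1 hb m t hbms
      have hxs : x.toFun m = some s := hx m s hms
      rw [hxt] at hxs
      rw [Option.some_inj.mp hxs]

lemma le_F (e : ℕ → σ) (x : ℕ → Bool) (M : ℕ) :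
    Lgen.ofList (parse e (pref x M)) ≤ F e x := by
  intro n s h
  exact F_spec e (by simpa using h)

lemma exists_M (e : ℕ → σ) (x : ℕ → Bool) (N : ℕ) :
    ∃ M, trunc (F e x) N ≤ Lgen.ofList (parse e (pref x M)) := by
  induction N with
  | zero =>
    refine ⟨0, fun n s hs => ?_⟩
    rw [trunc_toFun, if_neg (by omega)] at hs
    exact nomatch hs
  | succ N ih =>
    obtain ⟨M, hM⟩ := ih
    cases hF : (F e x).toFun N with
    | none =>
      refine ⟨M, fun n s hs => ?_⟩
      rw [trunc_toFun] at hs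
      split at hs
      · next hn =>
        have hnN : n < N := by
          rcases Nat.lt_or_ge n N with h | h
          · exact h
          · exfalso
            have heq : n = N := by omega
            subst heq
            rw [hF] at hs
            exact nomatch hs
        exact hM n s (by rw [trunc_toFun, if_pos hnN]; exact hs)
      · exact nomatch hs
    | some s0 =>
      obtain ⟨M', hM'⟩ := (F_some_iff e).mp hF
      refine ⟨max M M', fun n s hs => ?_⟩
      rw [trunc_toFun] at hs
      split at hs
      · next hn =>
        rcases Nat.lt_or_ge n N with h | h
        · have h2 := hM n s (by rw [trunc_toFun, if_pos h]; exact hs)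
          simp only [ofList_toFun] at h2 ⊢
          exact parse_stable e (le_max_left _ _) h2
        · have hnN : n = N := by omega
          subst hnN
          rw [hF] at hs
          rw [Option.some_inj.mp hs] at hM'
          simp only [ofList_toFun]
          exact parse_stable e (le_max_right _ _) hM'
      · exact nomatch hs

def cyl (x : ℕ → Bool) (M : ℕ) : Set (ℕ → Bool) := {y | ∀ i < M, y i = x i}

lemma pref_eq_of_cyl {x y : ℕ → Bool} {M : ℕ} (h : y ∈ cyl x M) : pref y M = pref x M := by
  simp only [pref]
  apply List.map_congr_left
  intro i hi
  exact h i (List.mem_range.mp hi)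

lemma isOpen_cyl (x : ℕ → Bool) (M : ℕ) : IsOpen (cyl x M) := by
  have : cyl x M = Set.pi (Set.Iio M) (fun i => {x i}) := by
    ext y
    simp [cyl, Set.mem_pi]
  rw [this]
  exact isOpen_set_pi (Set.finite_Iio M) (fun a _ => isOpen_discrete _)

lemma Lgen.ext' {f g : Lgen σ} (h : ∀ n, f.toFun n = g.toFun n) : f = g := by
  obtain ⟨ff, hf⟩ := f
  obtain ⟨gf, hg⟩ := g
  have : ff = gf := funext h
  subst this
  rfl

lemma range_map_eq (f : ℕ → Bool) {B : ℕ} (hB : 1 ≤ B)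
    (h1 : ∀ i, i < B - 1 → f i = true) (h2 : f (B - 1) = false) :
    (List.range B).map f = List.replicate (B - 1) true ++ [false] := by
  apply List.ext_getElem
  · simp; omega
  · intro i hi1 hi2
    simp only [List.getElem_map, List.getElem_range]
    rcases Nat.lt_or_ge i (B - 1) with h | h
    · rw [List.getElem_append_left (by simpa using h)]
      rw [List.getElem_replicate]
      exact h1 i h
    · have hieq : i = B - 1 := by
        simp only [List.length_map, List.length_range] at hi1
        omega
      subst hieq
      rw [List.getElem_append_right (by simp)]
      simp [h2]

section Construction

variable (e : ℕ → σ) (g : Lgen σ) (L k : ℕ)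

/-- the bound on the code for the `n`-th block -/
def st (n : ℕ) : ℕ := if n = 0 then k else 0

open Classical in
/-- code for the `n`-th appended symbol -/
noncomputable def code (n : ℕ) : ℕ :=
  if h : ∃ m, st k n ≤ m ∧ g.toFun (L + n) = some (e m) then h.choose else 0

lemma code_spec (He : ∀ k (s : σ), ∃ m, k ≤ m ∧ e m = s) (n : ℕ)
    (h : g.toFun (L + n) ≠ none) :
    st k n ≤ code e g L k n ∧ g.toFun (L + n) = some (e (code e g L k n)) := by
  cases hs : g.toFun (L + n) with
  | none => exact absurd hs h
  | some s =>
    obtain ⟨m, hm1, hm2⟩ := He (st k n) s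
    have hex : ∃ m, st k n ≤ m ∧ g.toFun (L + n) = some (e m) := ⟨m, hm1, by rw [hs, hm2]⟩
    rw [code, dif_pos hex]
    exact ⟨hex.choose_spec.1, hs ▸ hex.choose_spec.2⟩

/-- length of the `n`-th appended block -/
noncomputable def bl (n : ℕ) : ℕ := code e g L k n + 1 - st k n

/-- cumulative block boundaries -/
noncomputable def D (n : ℕ) : ℕ := ∑ i ∈ Finset.range n, bl e g L k i

lemma D_zero : D e g L k 0 = 0 := by simp [D]

lemma D_succ (n : ℕ) : D e g L k (n + 1) = D e g L k n + bl e g L k n :=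
  Finset.sum_range_succ _ n

lemma D_mono : Monotone (D e g L k) := by
  intro a b hab
  exact Finset.sum_le_sum_of_subset (Finset.range_subset_range.mpr hab)

open Classical in
/-- the appended bit stream -/
noncomputable def ycon (i : ℕ) : Bool :=
  if ∃ n, g.toFun (L + n) ≠ none ∧ D e g L k (n + 1) = i + 1 then false else true

lemma ycon_false_iff (i : ℕ) :
    ycon e g L k i = false ↔ ∃ n, g.toFun (L + n) ≠ none ∧ D e g L k (n + 1) = i + 1 := by
  classical
  rw [ycon]
  split
  · next h => simpa using h
  · next h => simpa using h

lemma ycon_true_iff (i : ℕ) :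
    ycon e g L k i = true ↔ ¬∃ n, g.toFun (L + n) ≠ none ∧ D e g L k (n + 1) = i + 1 := by
  rw [← ycon_false_iff]
  cases ycon e g L k i <;> simp

variable {e g L k} in
lemma bl_pos (He : ∀ k (s : σ), ∃ m, k ≤ m ∧ e m = s) {n : ℕ}
    (h : g.toFun (L + n) ≠ none) : 1 ≤ bl e g L k n := by
  have := (code_spec e g L k He n h).1
  rw [bl]
  omega

variable {e g L k} in
lemma PA_pref_ycon (He : ∀ k (s : σ), ∃ m, k ≤ m ∧ e m = s) (N : ℕ)
    (hN : ∀ n < N, g.toFun (L + n) ≠ none) :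
    PA e k (pref (ycon e g L k) (D e g L k N)) =
      ((List.range N).map (fun j => e (code e g L k j)), if N = 0 then k else 0) := by
  induction N with
  | zero => simp [D_zero, pref, PA_nil]
  | succ N ih =>
    have hPN : g.toFun (L + N) ≠ none := hN N (by omega)
    have hblN : 1 ≤ bl e g L k N := bl_pos He hPN
    have hcode := code_spec e g L k He N hPN
    have hblock : (List.range (bl e g L k N)).map (fun i => ycon e g L k (D e g L k N + i)) =
        List.replicate (bl e g L k N - 1) true ++ [false] := by
      apply range_map_eq _ hblN
      · intro i hi
        rw [ycon_true_iff]
        rintro ⟨n', hn'1, hn'2⟩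
        rcases Nat.lt_or_ge n' N with h | h
        · have : D e g L k (n' + 1) ≤ D e g L k N := D_mono e g L k (by omega)
          omega
        · have : D e g L k (N + 1) ≤ D e g L k (n' + 1) := D_mono e g L k (by omega)
          rw [D_succ] at this
          omega
      · rw [ycon_false_iff]
        exact ⟨N, hPN, by rw [D_succ]; omega⟩
    rw [D_succ, pref_add, PA_append, ih (fun n hn => hN n (by omega))]
    rw [hblock, PA_snoc_false, PA_replicate_true]
    simp only [PA_nil, List.append_nil]
    have hst : (if N = 0 then k else 0) = st k N := rfl
    have harg : (if N = 0 then k else 0) + (bl e g L k N - 1) = code e g L k N := by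
      rw [hst, bl]
      have := hcode.1
      omega
    rw [harg, List.range_succ, List.map_append]
    simp

variable {e g L k} in
lemma PA_pref_ycon_le (He : ∀ k (s : σ), ∃ m, k ≤ m ∧ e m = s) (T : ℕ)
    (hTdef : ∀ n < T, g.toFun (L + n) ≠ none)
    (hT : ∀ n, g.toFun (L + n) ≠ none → n < T) (M : ℕ) :
    (PA e k (pref (ycon e g L k) M)).1.length ≤ T := by
  set y := ycon e g L k
  set DT := D e g L k T with hDT
  have hat : (PA e k (pref y DT)).1.length = T := by
    rw [PA_pref_ycon He T hTdef]
    simp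
  rcases Nat.lt_or_ge M DT with h | h
  · obtain ⟨t, ht⟩ := pref_prefix y (le_of_lt h)
    have := PA_fst_prefix e k (pref y M) t
    rw [ht] at this
    calc (PA e k (pref y M)).1.length ≤ (PA e k (pref y DT)).1.length := this.length_le
    _ = T := hat
  · have htail : (List.range (M - DT)).map (fun i => y (DT + i)) =
        List.replicate (M - DT) true := by
      apply List.ext_getElem (by simp)
      intro i hi1 hi2
      simp only [List.getElem_map, List.getElem_range, List.getElem_replicate]
      rw [ycon_true_iff]
      rintro ⟨n', hn'1, hn'2⟩
      have hn'T : n' < T := hT n' hn'1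
      have : D e g L k (n' + 1) ≤ DT := D_mono e g L k (by omega)
      omega
    have hM : M = DT + (M - DT) := by omega
    rw [hM, pref_add, PA_append, htail, PA_replicate_true]
    simpa using hat.le

end Construction

lemma extend_exists (e : ℕ → σ) (He : ∀ k (s : σ), ∃ m, k ≤ m ∧ e m = s)
    (w : List Bool) (g : Lgen σ) (hle : Lgen.ofList (parse e w) ≤ g) :
    ∃ x : ℕ → Bool, pref x w.length = w ∧ F e x = g := by
  classical
  set L := (parse e w).length with hL
  set k := (PA e 0 w).2 with hk
  set y := ycon e g L k with hy
  set x : ℕ → Bool := fun i => if h : i < w.length then w[i] else y (i - w.length) with hx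
  have hprefw : pref x w.length = w := by
    apply List.ext_getElem (by simp)
    intro i hi1 hi2
    simp only [pref, List.getElem_map, List.getElem_range, hx]
    rw [dif_pos hi2]
  have hprefx : ∀ M, pref x (w.length + M) = w ++ pref y M := by
    intro M
    rw [pref_add, hprefw]
    congr 1
    apply List.map_congr_left
    intro i hi
    simp only [hx]
    rw [dif_neg (by omega)]
    congr 1
    omega
  have hparse : ∀ M, parse e (pref x (w.length + M)) = parse e w ++ (PA e k (pref y M)).1 := by
    intro M
    rw [hprefx, parse, PA_append]
    rfl
  refine ⟨x, hprefw, ?_⟩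
  apply Lgen.ext'
  intro n
  rcases Nat.lt_or_ge n L with hn | hn
  · -- position inside `parse e w`
    have hlt : n < (parse e w).length := hn
    have hv : (parse e w)[n]? = some ((parse e w)[n]'hlt) := List.getElem?_eq_getElem hlt
    have hgn : g.toFun n = some ((parse e w)[n]'hlt) := hle n _ (by simpa using hv)
    have hFn : (F e x).toFun n = some ((parse e w)[n]'hlt) := by
      apply F_spec e (M := w.length)
      rw [show pref x w.length = w from hprefw]
      exact hv
    rw [hFn, hgn]
  · obtain ⟨j, rfl⟩ : ∃ j, n = L + j := ⟨n - L, by omega⟩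
    by_cases hPj : g.toFun (L + j) ≠ none
    · have hdef : ∀ m < j + 1, g.toFun (L + m) ≠ none := by
        intro m hm
        exact defined_mono g (by omega) hPj
      have hPA := PA_pref_ycon (e := e) (g := g) (L := L) (k := k) He (j + 1) hdef
      have hcode := code_spec e g L k He j hPj
      have hFn : (F e x).toFun (L + j) = some (e (code e g L k j)) := by
        apply F_spec e (M := w.length + D e g L k (j + 1))
        rw [hparse]
        have h1 : (PA e k (pref y (D e g L k (j + 1)))).1
            = (List.range (j + 1)).map (fun j' => e (code e g L k j')) := by
          rw [← hy] at hPA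
          rw [hPA]
        rw [h1, List.getElem?_append, if_neg (by omega)]
        have hnL : L + j - (parse e w).length = j := by omega
        rw [hnL, List.getElem?_map, List.getElem?_range (by omega)]
        rfl
      rw [hFn, hcode.2]
    · push_neg at hPj
      rw [hPj, F_none_iff]
      intro M
      have hex : ∃ m, g.toFun (L + m) = none := ⟨j, hPj⟩
      set T := Nat.find hex with hT
      have hTj : T ≤ j := Nat.find_le hPj
      have hTdef : ∀ m < T, g.toFun (L + m) ≠ none := fun m hm => Nat.find_min hex hm
      have hTbound : ∀ m, g.toFun (L + m) ≠ none → m < T := by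
        intro m hm
        by_contra hge
        push_neg at hge
        exact (defined_mono g (by omega) hm) (Nat.find_spec hex)
      have hlen : (parse e (pref x M)).length ≤ (parse e (pref x (w.length + M))).length :=
        (parse_prefix_mono e (by omega)).length_le
      rw [hparse] at hlen
      have hbound := PA_pref_ycon_le (e := e) (g := g) (L := L) (k := k) He T hTdef hTbound M
      simp only [List.length_append] at hlen
      rw [← hy] at hbound
      omega

lemma mem_cyl_of_pref_eq {x y : ℕ → Bool} {M : ℕ} (h : pref y M = pref x M) : y ∈ cyl x M := by
  intro i hi
  have h2 : (pref y M)[i]? = (pref x M)[i]? := by rw [h]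
  simp only [pref, List.getElem?_map, List.getElem?_range hi, Option.map_some] at h2
  exact Option.some_inj.mp h2

end S11


/-- For every nonempty countable `σ`, the space `𝐋_σ` is an interior image
of the Cantor space: there is a surjective map from `ℕ → Bool` (with the product topology)
onto `L_σ` (with the Scott topology) that is continuous and open. -/
theorem statement11 (σ : Type*) [Countable σ] [Nonempty σ] :
    ∃ f : (ℕ → Bool) → Lgen σ, Function.Surjective f ∧ Continuous f ∧ IsOpenMap f := by
  obtain ⟨e₀, he₀⟩ := exists_surjective_nat σ
  set e : ℕ → σ := fun n => e₀ (Nat.unpair n).2 with he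
  have He : ∀ k (s : σ), ∃ m, k ≤ m ∧ e m = s := by
    intro k s
    obtain ⟨j, hj⟩ := he₀ s
    exact ⟨Nat.pair k j, Nat.left_le_pair k j, by simp [he, Nat.unpair_pair, hj]⟩
  refine ⟨S11.F e, ?_, ?_, ?_⟩
  · intro g
    obtain ⟨x, -, hx⟩ := S11.extend_exists e He [] g (by intro n s h; simp [S11.parse, S11.PA_nil] at h)
    exact ⟨x, hx⟩
  · rw [continuous_def]
    intro U hU
    rw [isOpen_iff_forall_mem_open]
    intro x hx
    obtain ⟨hup, hd⟩ := S11.isOpen_iff.mp hU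
    obtain ⟨a, ⟨N, rfl⟩, haU⟩ := hd _ ⟨_, Set.mem_range_self 0⟩ (S11.directedOn_trunc _) _
      (S11.isLUB_trunc (S11.F e x)) hx
    obtain ⟨M, hM⟩ := S11.exists_M e x N
    refine ⟨S11.cyl x M, ?_, S11.isOpen_cyl x M, fun i _ => rfl⟩
    intro y hy
    show S11.F e y ∈ U
    refine hup (le_trans hM ?_) haU
    have h2 := S11.le_F e y M
    rwa [S11.pref_eq_of_cyl hy] at h2
  · intro U hU
    rw [isOpen_iff_forall_mem_open]
    rintro _ ⟨x, hxU, rfl⟩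
    obtain ⟨I, u, hu, hsub⟩ := isOpen_pi_iff.mp hU x hxU
    set M := (I.sup id) + 1 with hMdef
    have hcylsub : S11.cyl x M ⊆ U := by
      intro y hy
      apply hsub
      intro i hi
      have h3 : y i = x i := hy i (by have := Finset.le_sup (f := id) hi; simp at this; omega)
      rw [h3]
      exact (hu i hi).2
    refine ⟨Set.Ici (Lgen.ofList (S11.parse e (S11.pref x M))), ?_,
      S11.isOpen_Ici_ofList _, S11.le_F e x M⟩
    intro g hg
    obtain ⟨x', hx'pref, hx'⟩ := S11.extend_exists e He (S11.pref x M) g hg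
    rw [S11.pref_length] at hx'pref
    exact ⟨x', hcylsub (S11.mem_cyl_of_pref_eq hx'pref), hx'⟩
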